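/- Let E be a real inner product space, let p ≥ 1, and define ∇φ_p(x) = ‖x‖^{p−1} x (the gradient of φ_p(x) = (1/(p+1))‖x‖^{p+1}). Then for all x, y ∈ E, ‖ ‖x‖^{p−1} x − ‖y‖^{p−1} y ‖ ≥ (1/2^{p−1}) ‖x − y‖^p. -/

import Mathlib

open Real

private lemma rpow_sq_comm {x : ℝ} (hx : 0 ≤ x) (q : ℝ) :
    (x ^ q) ^ 2 = (x ^ 2) ^ q := by
  rw [← Real.rpow_natCast (x ^ q) 2, ← Real.rpow_natCast x 2,
    ← Real.rpow_mul hx, ← Real.rpow_mul hx]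
  congr 1
  push_cast
  ring

private lemma rpow_sub_one_mul {a : ℝ} (ha : 0 ≤ a) {p : ℝ} (hp : 1 ≤ p) :
    a ^ (p - 1) * a = a ^ p := by
  rcases eq_or_lt_of_le ha with h | h
  · rw [← h, Real.zero_rpow (ne_of_gt (by linarith : (0:ℝ) < p))]
    ring
  · have := Real.rpow_add_one h.ne' (p - 1)
    rw [show p - 1 + 1 = p by ring] at this
    exact this.symm

private lemma aux_superadd {p : ℝ} (hp : 1 ≤ p) {x y : ℝ} (hx : 0 ≤ x) (hy : 0 ≤ y) :
    x ^ p + y ^ p ≤ (x + y) ^ p := by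
  have h := NNReal.add_rpow_le_rpow_add x.toNNReal y.toNNReal hp
  have h2 := (NNReal.coe_le_coe).2 h
  push_cast at h2
  rwa [Real.coe_toNNReal x hx, Real.coe_toNNReal y hy] at h2

private lemma aux_powermean {p : ℝ} (hp : 1 ≤ p) {x y : ℝ} (hx : 0 ≤ x) (hy : 0 ≤ y) :
    (2:ℝ) ^ (1 - p) * (x + y) ^ p ≤ x ^ p + y ^ p := by
  have h := (convexOn_rpow hp).2 (Set.mem_Ici.mpr hx) (Set.mem_Ici.mpr hy)
    (by norm_num : (0:ℝ) ≤ 1/2) (by norm_num : (0:ℝ) ≤ 1/2) (by norm_num)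
  simp only [smul_eq_mul] at h
  have h3 : ((x + y) / 2) ^ p = (x + y) ^ p * ((2:ℝ) ^ p)⁻¹ := by
    rw [div_eq_mul_inv, Real.mul_rpow (by linarith) (by norm_num),
      Real.inv_rpow (by norm_num : (0:ℝ) ≤ 2)]
  have h4 : (2:ℝ) ^ (1 - p) = 2 * ((2:ℝ) ^ p)⁻¹ := by
    rw [Real.rpow_sub (by norm_num : (0:ℝ) < 2), Real.rpow_one, div_eq_mul_inv]
  have h5 : (x + y) ^ p * ((2:ℝ) ^ p)⁻¹ ≤ 1/2 * x ^ p + 1/2 * y ^ p := by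
    rw [← h3, show (x + y) / 2 = 1/2 * x + 1/2 * y by ring]
    exact h
  rw [h4]
  linarith

private lemma key_scalar (p : ℝ) (hp : 1 ≤ p) (a b t : ℝ) (hb : 0 ≤ b) (hab : b ≤ a)
    (ht : |t| ≤ a * b) :
    ((2:ℝ) ^ (1 - p)) ^ 2 * (a ^ 2 + b ^ 2 - 2 * t) ^ p
      ≤ (a ^ p) ^ 2 + (b ^ p) ^ 2 - 2 * (a ^ (p - 1) * b ^ (p - 1)) * t := by
  have ha : 0 ≤ a := hb.trans hab
  have h2 : (0:ℝ) ≤ (2:ℝ) ^ (1 - p) := Real.rpow_nonneg (by norm_num) _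
  have h2le : (2:ℝ) ^ (1 - p) ≤ 1 :=
    Real.rpow_le_one_of_one_le_of_nonpos (by norm_num) (by linarith)
  rcases eq_or_lt_of_le hb with hb0 | hb0
  · -- b = 0, hence t = 0
    have htz : t = 0 := by
      have : |t| ≤ 0 := by rw [← hb0] at ht; simpa using ht
      simpa [abs_nonpos_iff] using this
    rw [← hb0, htz, Real.zero_rpow (ne_of_gt (by linarith : (0:ℝ) < p))]
    have hsq : (a ^ 2 + 0 ^ 2 - 2 * 0) ^ p = (a ^ p) ^ 2 := by
      rw [show a ^ 2 + 0 ^ 2 - 2 * 0 = a ^ 2 by ring, ← rpow_sq_comm ha]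
    rw [hsq]
    have h2sq : ((2:ℝ) ^ (1 - p)) ^ 2 ≤ 1 := by nlinarith
    nlinarith [sq_nonneg (a ^ p)]
  · -- b > 0
    have ha' : 0 < a := lt_of_lt_of_le hb0 hab
    have hab' : 0 < a * b := mul_pos ha' hb0
    have ht1 : t ≤ a * b := (abs_le.mp ht).2
    have ht2 : -(a * b) ≤ t := (abs_le.mp ht).1
    set L : ℝ := (a * b - t) / (2 * (a * b)) with hL
    have hL0 : 0 ≤ L := div_nonneg (by linarith) (by linarith)
    have hL1 : L ≤ 1 := by rw [div_le_one (by linarith)]; linarith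
    have hmix : (1 - L) * (a - b) ^ 2 + L * (a + b) ^ 2 = a ^ 2 + b ^ 2 - 2 * t := by
      rw [hL]; field_simp; ring
    have hcvx := (convexOn_rpow hp).2 (Set.mem_Ici.mpr (sq_nonneg (a - b)))
      (Set.mem_Ici.mpr (sq_nonneg (a + b))) (by linarith : (0:ℝ) ≤ 1 - L) hL0 (by ring)
    simp only [smul_eq_mul] at hcvx
    have habnn : 0 ≤ a - b := sub_nonneg.mpr hab
    -- endpoint inequalities
    have hAs := aux_superadd hp habnn hb
    rw [show a - b + b = a by ring] at hAs
    have hA : (2:ℝ) ^ (1 - p) * (a - b) ^ p ≤ a ^ p - b ^ p := by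
      nlinarith [Real.rpow_nonneg habnn p]
    have hAnn : (0:ℝ) ≤ (2:ℝ) ^ (1 - p) * (a - b) ^ p := by positivity
    have hB := aux_powermean hp ha hb
    have hBnn : (0:ℝ) ≤ (2:ℝ) ^ (1 - p) * (a + b) ^ p := by positivity
    have hA2 : ((2:ℝ) ^ (1 - p)) ^ 2 * ((a - b) ^ p) ^ 2 ≤ (a ^ p - b ^ p) ^ 2 := by
      have := pow_le_pow_left₀ hAnn hA 2
      rwa [mul_pow] at this
    have hB2 : ((2:ℝ) ^ (1 - p)) ^ 2 * ((a + b) ^ p) ^ 2 ≤ (a ^ p + b ^ p) ^ 2 := by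
      have := pow_le_pow_left₀ hBnn hB 2
      rwa [mul_pow] at this
    calc ((2:ℝ) ^ (1 - p)) ^ 2 * (a ^ 2 + b ^ 2 - 2 * t) ^ p
        = ((2:ℝ) ^ (1 - p)) ^ 2 * ((1 - L) * (a - b) ^ 2 + L * (a + b) ^ 2) ^ p := by
          rw [hmix]
      _ ≤ ((2:ℝ) ^ (1 - p)) ^ 2 * ((1 - L) * ((a - b) ^ 2) ^ p + L * ((a + b) ^ 2) ^ p) :=
          mul_le_mul_of_nonneg_left hcvx (sq_nonneg _)
      _ = (1 - L) * (((2:ℝ) ^ (1 - p)) ^ 2 * ((a - b) ^ p) ^ 2)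
            + L * (((2:ℝ) ^ (1 - p)) ^ 2 * ((a + b) ^ p) ^ 2) := by
          rw [← rpow_sq_comm habnn, ← rpow_sq_comm (by linarith : (0:ℝ) ≤ a + b)]
          ring
      _ ≤ (1 - L) * (a ^ p - b ^ p) ^ 2 + L * (a ^ p + b ^ p) ^ 2 :=
          add_le_add (mul_le_mul_of_nonneg_left hA2 (by linarith))
            (mul_le_mul_of_nonneg_left hB2 hL0)
      _ = (a ^ p) ^ 2 + (b ^ p) ^ 2 - 2 * (a ^ p * b ^ p) + L * (4 * (a ^ p * b ^ p)) := by
          ring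
      _ = (a ^ p) ^ 2 + (b ^ p) ^ 2 - 2 * (a ^ (p - 1) * b ^ (p - 1)) * t := by
          rw [← rpow_sub_one_mul ha hp, ← rpow_sub_one_mul hb hp, hL]
          field_simp
          ring

/-- **gradient-difference bound of Proposition 1.**
In a real inner product space, for `p ≥ 1` and the map `∇φ_p(x) = ‖x‖^(p−1) x`,
one has `‖‖x‖^(p−1) x − ‖y‖^(p−1) y‖ ≥ (1/2^(p−1)) ‖x − y‖^p`. -/
theorem power_gradient_difference_bound
    {E : Type*} [NormedAddCommGroup E] [InnerProductSpace ℝ E]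
    (p : ℝ) (hp : 1 ≤ p) (x y : E) :
    (1 / (2 : ℝ) ^ (p - 1)) * ‖x - y‖ ^ p
      ≤ ‖(‖x‖ ^ (p - 1)) • x - (‖y‖ ^ (p - 1)) • y‖ := by
  wlog hba : ‖y‖ ≤ ‖x‖ with H
  · have h := H p hp y x (le_of_not_ge hba)
    rwa [norm_sub_rev y x, norm_sub_rev ((‖y‖ ^ (p - 1)) • y)] at h
  have ha : (0:ℝ) ≤ ‖x‖ := norm_nonneg x
  have hb : (0:ℝ) ≤ ‖y‖ := norm_nonneg y
  have ht : |(inner ℝ x y : ℝ)| ≤ ‖x‖ * ‖y‖ := abs_real_inner_le_norm x y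
  have hAnn : (0:ℝ) ≤ ‖x‖ ^ (p - 1) := Real.rpow_nonneg ha _
  have hBnn : (0:ℝ) ≤ ‖y‖ ^ (p - 1) := Real.rpow_nonneg hb _
  have hc2 : ‖x - y‖ ^ 2 = ‖x‖ ^ 2 + ‖y‖ ^ 2 - 2 * (inner ℝ x y : ℝ) := by
    rw [@norm_sub_sq_real]; ring
  have hN2 : ‖(‖x‖ ^ (p - 1)) • x - (‖y‖ ^ (p - 1)) • y‖ ^ 2
      = (‖x‖ ^ p) ^ 2 + (‖y‖ ^ p) ^ 2
        - 2 * (‖x‖ ^ (p - 1) * ‖y‖ ^ (p - 1)) * (inner ℝ x y : ℝ) := by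
    rw [@norm_sub_sq_real, norm_smul, norm_smul, real_inner_smul_left, real_inner_smul_right,
      Real.norm_of_nonneg hAnn, Real.norm_of_nonneg hBnn]
    rw [show ‖x‖ ^ (p - 1) * ‖x‖ = ‖x‖ ^ p from rpow_sub_one_mul ha hp,
      show ‖y‖ ^ (p - 1) * ‖y‖ = ‖y‖ ^ p from rpow_sub_one_mul hb hp]
    ring
  have hconst : (1 / (2 : ℝ) ^ (p - 1)) = (2:ℝ) ^ (1 - p) := by
    rw [one_div, ← Real.rpow_neg (by norm_num : (0:ℝ) ≤ 2), neg_sub]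
  rw [hconst]
  have hkey := key_scalar p hp ‖x‖ ‖y‖ (inner ℝ x y) hb hba ht
  have h1 : ((2:ℝ) ^ (1 - p) * ‖x - y‖ ^ p) ^ 2
      ≤ ‖(‖x‖ ^ (p - 1)) • x - (‖y‖ ^ (p - 1)) • y‖ ^ 2 := by
    rw [mul_pow, rpow_sq_comm (norm_nonneg (x - y)), hc2, hN2]
    exact hkey
  calc (2:ℝ) ^ (1 - p) * ‖x - y‖ ^ p
      = Real.sqrt (((2:ℝ) ^ (1 - p) * ‖x - y‖ ^ p) ^ 2) :=
        (Real.sqrt_sq (by positivity)).symm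
    _ ≤ Real.sqrt (‖(‖x‖ ^ (p - 1)) • x - (‖y‖ ^ (p - 1)) • y‖ ^ 2) :=
        Real.sqrt_le_sqrt h1
    _ = _ := Real.sqrt_sq (norm_nonneg _)
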